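/- Let G be a connected graph, C a modulator to disjoint paths, P a shortest path in G with ecc_G(P) ≤ k, endpoints p_1, p_last, Ĉ = C ∪ {p_1, p_last}, δ(s) = d_G(s, V(P)) for s ∈ Ĉ, and d^δ(v) = min_{s∈Ĉ}(d_G(v,s)+δ(s)). If v is a vertex with d^δ(v) ≥ k+1 and u is a vertex on P nearest to v, then either u = v, or d_G(u,v) = k and u has a neighbor in Ĉ ∩ V(P). -/

import Mathlib

open SimpleGraph

/-- `C` is a modulator to disjoint paths: `G - C` is a vertex-disjoint union of paths,
i.e. acyclic with maximum degree at most 2. -/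
def IsPathsModulator {V : Type*} (G : SimpleGraph V) (C : Set V) : Prop :=
  (G.induce Cᶜ).IsAcyclic ∧ ∀ v : ↥Cᶜ, ((G.induce Cᶜ).neighborSet v).ncard ≤ 2

/-- distance from a vertex to a set of vertices -/
noncomputable def dset {V : Type*} (G : SimpleGraph V) (u : V) (S : Set V) : ℕ∞ :=
  ⨅ s ∈ S, G.edist u s

/-- eccentricity of a set of vertices -/
noncomputable def eccSet {V : Type*} (G : SimpleGraph V) (S : Set V) : ℕ∞ :=
  ⨆ u, dset G u S

private lemma getVert_inj_aux {V : Type*} {G : SimpleGraph V} {a b : V} {p : G.Walk a b}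
    (hp : p.support.Nodup) {i j : ℕ} (hi : i ≤ p.length) (hj : j ≤ p.length)
    (h : p.getVert i = p.getVert j) : i = j := by
  induction p generalizing i j with
  | nil => simp only [Walk.length_nil, Nat.le_zero] at hi hj; omega
  | @cons x y z hadj q ih =>
    rw [Walk.support_cons, List.nodup_cons] at hp
    match i, j with
    | 0, 0 => rfl
    | 0, j+1 =>
      exfalso
      apply hp.1
      rw [Walk.mem_support_iff_exists_getVert]
      exact ⟨j, by simpa [Walk.getVert_cons_succ] using h.symm, by
        simpa [Walk.length_cons] using hj⟩
    | i+1, 0 =>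
      exfalso
      apply hp.1
      rw [Walk.mem_support_iff_exists_getVert]
      exact ⟨i, by simpa [Walk.getVert_cons_succ] using h, by
        simpa [Walk.length_cons] using hi⟩
    | i+1, j+1 =>
      have := ih hp.2 (i := i) (j := j) (by simpa [Walk.length_cons] using hi)
        (by simpa [Walk.length_cons] using hj)
        (by simpa [Walk.getVert_cons_succ] using h)
      omega

private lemma dset_le_edist {V : Type*} {G : SimpleGraph V} {u x : V} {S : Set V}
    (hx : x ∈ S) : dset G u S ≤ G.edist u x := by
  rw [dset]
  exact iInf₂_le x hx

private lemma dset_eq_zero_of_mem {V : Type*} {G : SimpleGraph V} {u : V} {S : Set V}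
    (hu : u ∈ S) : dset G u S = 0 :=
  le_antisymm ((dset_le_edist (G := G) (u := u) hu).trans (by rw [SimpleGraph.edist_self])) zero_le

/-- If `ecc_G(P) ≤ k`, `v` has `d^δ(v) ≥ k+1` and `u` is a vertex of `P` nearest
to `v`, then either `u = v`, or `d_G(u,v) = k` and `u` has a neighbor in `Ĉ ∩ V(P)`. -/
theorem stmt10 {V : Type*} [Fintype V] (G : SimpleGraph V) (hG : G.Connected)
    (C : Set V) (hC : IsPathsModulator G C) (k : ℕ)
    {a b : V} (P : G.Walk a b) (hP : P.IsPath) (hs : P.length = G.dist a b)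
    (hecc : eccSet G {x | x ∈ P.support} ≤ (k : ℕ∞))
    (v u : V) (hu : u ∈ P.support)
    (hnear : G.edist v u = dset G v {x | x ∈ P.support})
    (hv : ((k + 1 : ℕ) : ℕ∞) ≤
      ⨅ s ∈ C ∪ {a, b}, (G.edist v s + dset G s {x | x ∈ P.support})) :
    u = v ∨ (G.edist u v = (k : ℕ∞) ∧
      ∃ w ∈ (C ∪ {a, b}) ∩ {x | x ∈ P.support}, G.Adj u w) := by
  classical
  set Psupp : Set V := {x | x ∈ P.support} with hPsupp
  have hCineq : ∀ s ∈ C ∪ {a, b}, ((k + 1 : ℕ) : ℕ∞) ≤ G.edist v s + dset G s Psupp :=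
    fun s hs => le_trans hv (iInf₂_le s hs)
  have huP : u ∈ Psupp := hu
  have hvu_le : G.edist v u ≤ (k : ℕ∞) := by
    rw [hnear]
    exact le_trans (le_iSup (fun x => dset G x Psupp) v) hecc
  have huH : u ∉ C ∪ {a, b} := by
    intro h
    have h1 := hCineq u h
    rw [dset_eq_zero_of_mem huP, add_zero] at h1
    have h2 : ((k + 1 : ℕ) : ℕ∞) ≤ (k : ℕ∞) := h1.trans hvu_le
    have := Nat.cast_le.mp h2
    omega
  by_cases huv : u = v
  · exact Or.inl huv
  right
  have hne : G.edist v u ≠ ⊤ := fun h => by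
    rw [h] at hvu_le
    exact absurd hvu_le (by simp)
  obtain ⟨n, hn⟩ : ∃ n : ℕ, G.edist v u = n := ⟨_, (ENat.coe_toNat hne).symm⟩
  have hnk : n ≤ k := by
    rw [hn] at hvu_le
    exact_mod_cast hvu_le
  have hn1 : 1 ≤ n := by
    by_contra h
    have h0 : n = 0 := by omega
    rw [h0] at hn
    exact huv (edist_eq_zero_iff.mp (by exact_mod_cast hn)).symm
  obtain ⟨Q, hQ⟩ := exists_walk_of_edist_eq_coe hn
  set R := Q.reverse with hR
  have hRlen : R.length = n := by rw [hR, Walk.length_reverse, hQ]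
  have hRnil : ¬ R.Nil := by rw [Walk.nil_iff_length_eq, hRlen]; omega
  set w := R.getVert 1 with hw
  have hadj_uw : G.Adj u w := R.adj_snd hRnil
  have hTw : (R.tail).length + 1 = R.length := Walk.length_tail_add_one hRnil
  have hvw : G.edist v w ≤ ((n - 1 : ℕ) : ℕ∞) := by
    rw [SimpleGraph.edist_comm]
    have h1 : G.edist w v ≤ (R.tail.length : ℕ∞) := edist_le R.tail
    have h2 : R.tail.length = n - 1 := by omega
    rwa [h2] at h1
  have hwP : w ∉ P.support := by
    intro hwp
    have h1 : dset G v Psupp ≤ G.edist v w := dset_le_edist hwp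
    rw [← hnear, hn] at h1
    have h2 := h1.trans hvw
    have : n ≤ n - 1 := by exact_mod_cast h2
    omega
  have hwC : w ∉ C := by
    intro hwc
    have h1 := hCineq w (Set.mem_union_left _ hwc)
    have h2 : dset G w Psupp ≤ 1 := by
      have h3 := dset_le_edist (G := G) (u := w) huP
      rwa [edist_eq_one_iff_adj.mpr hadj_uw.symm] at h3
    have h4 : ((k + 1 : ℕ) : ℕ∞) ≤ ((n - 1 : ℕ) : ℕ∞) + 1 :=
      h1.trans (add_le_add hvw h2)
    have h5 : ((k + 1 : ℕ) : ℕ∞) ≤ ((n - 1 + 1 : ℕ) : ℕ∞) := by push_cast; push_cast at h4; exact h4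
    have := Nat.cast_le.mp h5
    omega
  obtain ⟨i, hgi, hil⟩ := Walk.mem_support_iff_exists_getVert.mp hu
  have hia : i ≠ 0 := by
    rintro rfl
    rw [Walk.getVert_zero] at hgi
    exact huH (Set.mem_union_right _ (by simp [← hgi]))
  have hib : i ≠ P.length := by
    rintro rfl
    rw [Walk.getVert_length] at hgi
    exact huH (Set.mem_union_right _ (by simp [← hgi]))
  have hilen : i < P.length := by omega
  set um := P.getVert (i - 1) with hum
  set up := P.getVert (i + 1) with hup
  have hadj1 : G.Adj um u := by
    have h1 := P.adj_getVert_succ (i := i - 1) (by omega)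
    rwa [show i - 1 + 1 = i by omega, hgi] at h1
  have hadj2 : G.Adj u up := by
    have h1 := P.adj_getVert_succ (i := i) hilen
    rwa [hgi] at h1
  have humP : um ∈ P.support :=
    Walk.mem_support_iff_exists_getVert.mpr ⟨i - 1, rfl, by omega⟩
  have hupP : up ∈ P.support :=
    Walk.mem_support_iff_exists_getVert.mpr ⟨i + 1, rfl, by omega⟩
  have hum_ne_up : um ≠ up := by
    intro h
    have := getVert_inj_aux hP.support_nodup (i := i - 1) (j := i + 1)
      (by omega) (by omega) h
    omega
  have hw_ne_um : w ≠ um := fun h => hwP (h ▸ humP)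
  have hw_ne_up : w ≠ up := fun h => hwP (h ▸ hupP)
  have hkey : um ∈ C ∨ up ∈ C := by
    by_contra hcon
    push_neg at hcon
    have huC : u ∉ C := fun h => huH (Set.mem_union_left _ h)
    set u' : ↥Cᶜ := ⟨u, huC⟩ with hu'
    set w' : ↥Cᶜ := ⟨w, hwC⟩ with hw'
    set um' : ↥Cᶜ := ⟨um, hcon.1⟩ with hum'
    set up' : ↥Cᶜ := ⟨up, hcon.2⟩ with hup'
    have hsub : ({w', um', up'} : Set ↥Cᶜ) ⊆ (G.induce Cᶜ).neighborSet u' := by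
      rintro x (rfl | rfl | rfl) <;>
        simp [hu', hw', hum', hup', SimpleGraph.mem_neighborSet, comap_adj,
          hadj_uw, hadj1.symm, hadj2]
    have h3 : ({w', um', up'} : Set ↥Cᶜ).ncard = 3 := by
      rw [Set.ncard_eq_three]
      exact ⟨w', um', up',
        fun h => hw_ne_um (congrArg Subtype.val h),
        fun h => hw_ne_up (congrArg Subtype.val h),
        fun h => hum_ne_up (congrArg Subtype.val h), rfl⟩
    have h4 := Set.ncard_le_ncard hsub (Set.toFinite _)
    have h5 := hC.2 u'
    omega
  have main : ∀ s : V, s ∈ C → s ∈ P.support → G.Adj u s →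
      (G.edist u v = (k : ℕ∞) ∧
        ∃ w ∈ (C ∪ {a, b}) ∩ Psupp, G.Adj u w) := by
    intro s hsC hsP hsadj
    have h1 := hCineq s (Set.mem_union_left _ hsC)
    rw [dset_eq_zero_of_mem (show s ∈ Psupp from hsP), add_zero] at h1
    have h2 : G.edist v s ≤ ((n + 1 : ℕ) : ℕ∞) := by
      calc G.edist v s ≤ G.edist v u + G.edist u s := SimpleGraph.edist_triangle
        _ ≤ ((n + 1 : ℕ) : ℕ∞) := by
            rw [hn, edist_eq_one_iff_adj.mpr hsadj]; push_cast; rfl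
    have h3 : (k + 1 : ℕ) ≤ n + 1 := Nat.cast_le.mp (h1.trans h2)
    have hnk' : n = k := by omega
    refine ⟨by rw [SimpleGraph.edist_comm, hn, hnk'], s,
      ⟨Set.mem_union_left _ hsC, hsP⟩, hsadj⟩
  obtain hcase | hcase := hkey
  · exact main um hcase humP hadj1.symm
  · exact main up hcase hupP hadj2
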